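/- Let p > 3 be prime, ζ_p a primitive p-th root of unity, and u a non-real unit of ℤ[ζ_p]. Let A(u) ∈ SL_{p-1}(ℤ) be the matrix of multiplication by u on ℤ[ζ_p] with respect to the basis 1, ζ_p, ..., ζ_p^{p-2}. Then for every positive integer k with k ≢ 0 (mod p), gcd(A(u)^k - I) = 1. -/

import Mathlib

open Polynomial

/-- The gcd of the entries of an integer matrix. -/
def matGcd {r : ℕ} (B : Matrix (Fin r) (Fin r) ℤ) : ℕ :=
  Finset.univ.gcd fun p : Fin r × Fin r => (B p.1 p.2).natAbs

lemma aux_prim {M : Type*} [CommMonoid M] {p : ℕ} (hp : p.Prime) {z : M} (h1 : z ^ p = 1)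
    (h2 : z ≠ 1) : IsPrimitiveRoot z p := by
  have hord : orderOf z ∣ p := orderOf_dvd_of_pow_eq_one h1
  have hop : orderOf z = p := by
    rcases hp.eq_one_or_self_of_dvd _ hord with h | h
    · exact absurd (orderOf_eq_one_iff.mp h) h2
    · exact h
  exact ⟨h1, fun l hl => hop ▸ orderOf_dvd_of_pow_eq_one hl⟩

lemma aux_conj_pow {z : ℂ} {p : ℕ} (hp : p ≠ 0) (h1 : z ^ p = 1) :
    (starRingEnd ℂ) z = z ^ (p - 1) := by
  have hz0 : z ≠ 0 := by
    intro h; rw [h, zero_pow hp] at h1; exact zero_ne_one h1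
  have habs : ‖z‖ = 1 := Complex.norm_eq_one_of_pow_eq_one h1 hp
  apply mul_left_cancel₀ hz0
  rw [Complex.mul_conj]
  have h2 : Complex.normSq z = 1 := by
    rw [← Complex.sq_norm, habs, one_pow]
  rw [h2, ← pow_succ', Nat.sub_add_cancel (Nat.one_le_iff_ne_zero.mpr hp), h1]
  norm_num

theorem stmt_14 (p : ℕ) (hp : p.Prime) (hp3 : 3 < p)
    (ζ : ℂ) (hζ : IsPrimitiveRoot ζ p)
    (u : ℂ) (hu : u ∈ Algebra.adjoin ℤ ({ζ} : Set ℂ))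
    (huunit : ∃ v ∈ Algebra.adjoin ℤ ({ζ} : Set ℂ), u * v = 1)
    (hnonreal : (starRingEnd ℂ) u ≠ u)
    (A : Matrix (Fin (p - 1)) (Fin (p - 1)) ℤ)
    (hA : ∀ i : Fin (p - 1), u * ζ ^ (i : ℕ) =
      ∑ j : Fin (p - 1), (A j i : ℂ) * ζ ^ (j : ℕ)) :
    ∀ k : ℕ, 1 ≤ k → ¬ p ∣ k → matGcd (A ^ k - 1) = 1 := by
  intro k hk1 hpk
  haveI : Fact p.Prime := ⟨hp⟩
  haveI : NeZero p := ⟨hp.pos.ne'⟩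
  set R : Subalgebra ℤ ℂ := Algebra.adjoin ℤ ({ζ} : Set ℂ) with hR
  have hp0 : p ≠ 0 := hp.pos.ne'
  have hζp : ζ ^ p = 1 := hζ.pow_eq_one
  have hζ1 : ζ ≠ 1 := hζ.ne_one (by omega)
  have hζR : ζ ∈ R := Algebra.subset_adjoin rfl
  have hζint : IsIntegral ℤ ζ := hζ.isIntegral hp.pos
  have hmin : cyclotomic p ℤ = minpoly ℤ ζ := cyclotomic_eq_minpoly hζ hp.pos
  -- membership in R via polynomials
  have hmem : ∀ x : ℂ, x ∈ R → ∃ f : ℤ[X], aeval ζ f = x := by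
    intro x hx
    rw [hR, Algebra.adjoin_singleton_eq_range_aeval] at hx
    exact hx
  have hker : ∀ f : ℤ[X], aeval ζ f = 0 → cyclotomic p ℤ ∣ f := by
    intro f hf
    rw [hmin]
    exact minpoly.isIntegrallyClosed_dvd hζint hf
  -- integrality of elements of R
  have hint : ∀ x : ℂ, x ∈ R → IsIntegral ℤ x := by
    intro x hx
    have hle : R ≤ integralClosure ℤ ℂ :=
      Algebra.adjoin_le (Set.singleton_subset_iff.mpr hζint)
    exact hle hx
  -- conjugation
  have hconjζ : (starRingEnd ℂ) ζ = ζ ^ (p - 1) := aux_conj_pow hp0 hζp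
  have hconjR : ∀ x : ℂ, x ∈ R → (starRingEnd ℂ) x ∈ R := by
    intro x hx
    have h1 : (starRingEnd ℂ) x ∈ R.map ((starRingEnd ℂ).toIntAlgHom) :=
      Subalgebra.mem_map.mpr ⟨x, hx, rfl⟩
    rw [hR, AlgHom.map_adjoin] at h1
    have h2 : (RingHom.toIntAlgHom (starRingEnd ℂ)) '' {ζ} = {ζ ^ (p-1)} := by
      simp [RingHom.toIntAlgHom, hconjζ]
    rw [h2] at h1
    have h3 : Algebra.adjoin ℤ ({ζ ^ (p-1)} : Set ℂ) ≤ R :=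
      Algebra.adjoin_le (by simpa using pow_mem hζR (p-1))
    exact h3 h1
  have hconj_aeval : ∀ f : ℤ[X],
      (starRingEnd ℂ) (aeval ζ f) = aeval ζ (f.comp (X ^ (p - 1))) := by
    intro f
    rw [aeval_comp]
    have : aeval ζ ((X : ℤ[X]) ^ (p-1)) = ζ ^ (p-1) := by simp
    rw [this, ← hconjζ]
    exact (aeval_algHom_apply ((starRingEnd ℂ).toIntAlgHom) ζ f).symm
  -- matrix powers represent powers of u
  have hpow : ∀ n : ℕ, ∀ i : Fin (p - 1), u ^ n * ζ ^ (i : ℕ) =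
      ∑ j : Fin (p - 1), ((A ^ n) j i : ℂ) * ζ ^ (j : ℕ) := by
    intro n
    induction n with
    | zero =>
      intro i
      simp [Matrix.one_apply, Finset.sum_ite_eq]
    | succ n ih =>
      intro i
      have h1 : u ^ (n + 1) * ζ ^ (i : ℕ) = u * (u ^ n * ζ ^ (i : ℕ)) := by ring
      rw [h1, ih i, Finset.mul_sum]
      have h2 : ∀ j : Fin (p - 1), u * (((A ^ n) j i : ℂ) * ζ ^ (j : ℕ)) =
          ∑ l : Fin (p - 1), ((A l j : ℂ) * ((A ^ n) j i : ℂ)) * ζ ^ (l : ℕ) := by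
        intro j
        calc u * (((A ^ n) j i : ℂ) * ζ ^ (j : ℕ))
            = ((A ^ n) j i : ℂ) * (u * ζ ^ (j : ℕ)) := by ring
          _ = ((A ^ n) j i : ℂ) * ∑ l : Fin (p - 1), (A l j : ℂ) * ζ ^ (l : ℕ) := by rw [hA j]
          _ = ∑ l : Fin (p - 1), ((A l j : ℂ) * ((A ^ n) j i : ℂ)) * ζ ^ (l : ℕ) := by
              rw [Finset.mul_sum]
              exact Finset.sum_congr rfl fun l _ => by ring
      rw [Finset.sum_congr rfl fun j _ => h2 j, Finset.sum_comm]
      refine Finset.sum_congr rfl fun l _ => ?_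
      rw [← Finset.sum_mul]
      congr 1
      have h3 : (A ^ (n + 1)) l i = ∑ j, A l j * (A ^ n) j i := by
        rw [pow_succ']
        rfl
      rw [h3]
      push_cast
      rfl
  -- the gcd
  set g : ℕ := matGcd (A ^ k - 1) with hgdef
  have hlt : 0 < p - 1 := by omega
  set z0 : Fin (p - 1) := ⟨0, hlt⟩ with hz0def
  have hgdvd : ∀ j : Fin (p - 1), (g : ℤ) ∣ (A ^ k - 1) j z0 := by
    intro j
    have h1 : g ∣ ((A ^ k - 1) j z0).natAbs :=
      Finset.gcd_dvd (Finset.mem_univ (j, z0))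
    have h2 : (g : ℤ) ∣ (((A ^ k - 1) j z0).natAbs : ℤ) := Int.natCast_dvd_natCast.mpr h1
    rcases Int.natAbs_eq ((A ^ k - 1) j z0) with h | h
    · rw [← h] at h2; exact h2
    · rw [h]; exact dvd_neg.mpr h2
  -- u^k - 1 = g * t with t ∈ R
  have hcol : u ^ k - 1 = ∑ j : Fin (p - 1), (((A ^ k - 1) j z0 : ℤ) : ℂ) * ζ ^ (j : ℕ) := by
    have h1 := hpow k z0
    have hz0c : ((z0 : Fin (p-1)) : ℕ) = 0 := rfl
    rw [hz0c, pow_zero, mul_one] at h1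
    have h2 : ∑ j : Fin (p - 1), (((A ^ k - 1) j z0 : ℤ) : ℂ) * ζ ^ (j : ℕ) =
        (∑ j : Fin (p - 1), ((A ^ k) j z0 : ℂ) * ζ ^ (j : ℕ)) -
        (∑ j : Fin (p - 1), (((1 : Matrix (Fin (p-1)) (Fin (p-1)) ℤ) j z0 : ℤ) : ℂ) * ζ ^ (j : ℕ)) := by
      rw [← Finset.sum_sub_distrib]
      refine Finset.sum_congr rfl fun j _ => ?_
      have : (A ^ k - 1) j z0 = (A ^ k) j z0 - (1 : Matrix (Fin (p-1)) (Fin (p-1)) ℤ) j z0 := rfl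
      rw [this]
      push_cast
      ring
    have h3 : ∑ j : Fin (p - 1), (((1 : Matrix (Fin (p-1)) (Fin (p-1)) ℤ) j z0 : ℤ) : ℂ) * ζ ^ (j : ℕ) = 1 := by
      rw [Finset.sum_eq_single z0]
      · rw [Matrix.one_apply_eq]
        norm_num
      · intro j _ hj
        rw [Matrix.one_apply_ne hj]
        norm_num
      · intro h; exact absurd (Finset.mem_univ z0) h
    rw [h2, h3, ← h1]
  obtain ⟨t, htR, ht⟩ : ∃ t, t ∈ R ∧ u ^ k - 1 = (g : ℂ) * t := by
    refine ⟨∑ j : Fin (p - 1), (((A ^ k - 1) j z0 / g : ℤ) : ℂ) * ζ ^ (j : ℕ), ?_, ?_⟩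
    · exact Subalgebra.sum_mem R fun j _ => Subalgebra.mul_mem R
        (by exact_mod_cast Subalgebra.intCast_mem R _) (Subalgebra.pow_mem R hζR _)
    · rw [hcol, Finset.mul_sum]
      refine Finset.sum_congr rfl fun j _ => ?_
      rw [← mul_assoc]
      congr 1
      have h := Int.mul_ediv_cancel' (hgdvd j)
      calc (((A ^ k - 1) j z0 : ℤ) : ℂ) = (((g : ℤ) * ((A ^ k - 1) j z0 / g) : ℤ) : ℂ) := by rw [h]
        _ = (g : ℂ) * (((A ^ k - 1) j z0 / g : ℤ) : ℂ) := by push_cast; ring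
  -- the unit w = u / conj u
  obtain ⟨v, hvR, huv⟩ := huunit
  have hu0 : u ≠ 0 := fun h => by simp [h] at huv
  have hv0 : v ≠ 0 := fun h => by simp [h] at huv
  set cu : ℂ := (starRingEnd ℂ) u with hcu
  set cv : ℂ := (starRingEnd ℂ) v with hcv
  have hcuR : cu ∈ R := hconjR u hu
  have hcvR : cv ∈ R := hconjR v hvR
  have hcucv : cu * cv = 1 := by rw [hcu, hcv, ← map_mul, huv, map_one]
  set w : ℂ := u * cv with hw
  have hwR : w ∈ R := Subalgebra.mul_mem R hu hcvR
  have hconjw : (starRingEnd ℂ) w = cu * v := by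
    rw [hw, map_mul, hcv, Complex.conj_conj, ← hcu]
  have hwcw : w * ((starRingEnd ℂ) w) = 1 := by
    rw [hconjw, hw]
    calc u * cv * (cu * v) = (u * v) * (cu * cv) := by ring
      _ = 1 := by rw [huv, hcucv, mul_one]
  have hw1 : w ≠ 1 := by
    intro h
    have hcveq : cv = v := mul_left_cancel₀ hu0 (by rw [← hw, h, huv])
    have hcuu : cu = u := by
      apply mul_right_cancel₀ hv0
      rw [huv, ← hcveq, hcucv]
    exact hnonreal hcuu
  -- p divides eval at 1 of multiples of the cyclotomic polynomial
  have heval1 : ∀ F : ℤ[X], cyclotomic p ℤ ∣ F → (p : ℤ) ∣ F.eval 1 := by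
    rintro F ⟨h, rfl⟩
    rw [eval_mul, eval_one_cyclotomic_prime]
    exact Dvd.intro _ rfl
  obtain ⟨fu, hfu⟩ := hmem u hu
  obtain ⟨fv, hfv⟩ := hmem v hvR
  have hfcv : aeval ζ (fv.comp (X ^ (p - 1))) = cv := by
    rw [← hconj_aeval, hfv]
  have hpuv : (p : ℤ) ∣ fu.eval 1 * fv.eval 1 - 1 := by
    have h0 : aeval ζ (fu * fv - 1) = 0 := by
      rw [map_sub, map_mul, hfu, hfv, huv, map_one, sub_self]
    have h1 := heval1 _ (hker _ h0)
    rwa [eval_sub, eval_mul, eval_one] at h1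
  have hwm1 : w ≠ -1 := by
    intro h
    have h0 : aeval ζ (fu * fv.comp (X ^ (p - 1)) + 1) = 0 := by
      rw [map_add, map_mul, hfu, hfcv, map_one, ← hw, h]
      ring
    have h1 := heval1 _ (hker _ h0)
    rw [eval_add, eval_mul, eval_one, eval_comp, eval_pow, eval_X, one_pow] at h1
    have h2 : (p : ℤ) ∣ 2 := by
      have := dvd_sub h1 hpuv
      simpa using this
    have := Int.le_of_dvd (by norm_num) h2
    omega
  -- the number field ℚ(ζ)
  have hζintQ : IsIntegral ℚ ζ := hζint.tower_top
  set K : IntermediateField ℚ ℂ := IntermediateField.adjoin ℚ {ζ} with hK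
  haveI : FiniteDimensional ℚ K := IntermediateField.adjoin.finiteDimensional hζintQ
  haveI : NumberField K := ⟨⟩
  have hζK : ζ ∈ K := IntermediateField.mem_adjoin_simple_self ℚ ζ
  have hRK : ∀ x : ℂ, x ∈ R → x ∈ K := by
    intro x hx
    have hle : R ≤ Subalgebra.restrictScalars ℤ K.toSubalgebra :=
      Algebra.adjoin_le (by
        intro y hy
        rw [Set.mem_singleton_iff] at hy
        subst hy
        exact hζK)
    exact hle hx
  set ζK : K := ⟨ζ, hζK⟩ with hζKdef
  set wK : K := ⟨w, hRK w hwR⟩ with hwKdef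
  obtain ⟨fw, hfw⟩ := hmem w hwR
  have hwKae : aeval ζK fw = wK := by
    apply Subtype.ext
    have h1 : aeval (algebraMap K ℂ ζK) fw = algebraMap K ℂ (aeval ζK fw) :=
      aeval_algebraMap_apply ℂ ζK fw
    have h2 : algebraMap K ℂ ζK = ζ := rfl
    rw [h2] at h1
    show ((aeval ζK fw : K) : ℂ) = w
    rw [← hfw]
    exact h1.symm
  have hdvdw : cyclotomic p ℤ ∣ fw * fw.comp (X ^ (p - 1)) - 1 := by
    apply hker
    rw [map_sub, map_mul, hfw, ← hconj_aeval, hfw, map_one, hwcw, sub_self]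
  have hnorm : ∀ φ : K →+* ℂ, ‖φ wK‖ = 1 := by
    intro φ
    set z : ℂ := φ ζK with hzdef
    have hζKp : ζK ^ p = 1 := by
      apply Subtype.ext
      push_cast
      exact hζp
    have hzp : z ^ p = 1 := by rw [hzdef, ← map_pow, hζKp, map_one]
    have hz1 : z ≠ 1 := by
      intro h
      apply hζ1
      have h2 : φ ζK = φ 1 := by rw [← hzdef, h, map_one]
      have h3 : ζK = (1 : K) := φ.injective h2
      have h4 : ((ζK : K) : ℂ) = ((1 : K) : ℂ) := by rw [h3]
      simpa [hζKdef] using h4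
    have hφw : φ wK = aeval z fw := by
      rw [← hwKae]
      exact (aeval_algHom_apply (φ.toIntAlgHom) ζK fw).symm
    have hconjz : (starRingEnd ℂ) z = z ^ (p - 1) := aux_conj_pow hp0 hzp
    have hprimz : IsPrimitiveRoot z p := aux_prim hp hzp hz1
    have hcycz : aeval z (cyclotomic p ℤ) = 0 := by
      rw [aeval_def, eval₂_eq_eval_map, map_cyclotomic]
      exact hprimz.isRoot_cyclotomic hp.pos
    have hprod : φ wK * (starRingEnd ℂ) (φ wK) = 1 := by
      rw [hφw]
      have h1 : (starRingEnd ℂ) (aeval z fw) = aeval z (fw.comp (X ^ (p - 1))) := by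
        rw [aeval_comp]
        have h2 : aeval z ((X : ℤ[X]) ^ (p - 1)) = z ^ (p - 1) := by simp
        rw [h2, ← hconjz]
        exact (aeval_algHom_apply ((starRingEnd ℂ).toIntAlgHom) z fw).symm
      rw [h1, ← map_mul]
      obtain ⟨h, hh⟩ := hdvdw
      have h3 : fw * fw.comp (X ^ (p - 1)) = cyclotomic p ℤ * h + 1 := by
        rw [← hh]; ring
      rw [h3, map_add, map_mul, hcycz, map_one, zero_mul, zero_add]
    have hsq : ‖φ wK‖ ^ 2 = 1 := by
      have h4 : (Complex.normSq (φ wK) : ℂ) = 1 := by rw [← Complex.mul_conj, hprod]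
      have h5 : Complex.normSq (φ wK) = 1 := by exact_mod_cast h4
      rw [Complex.sq_norm, h5]
    nlinarith [norm_nonneg (φ wK)]
  have hwint : IsIntegral ℤ wK := by
    have h1 : IsIntegral ℤ (algebraMap K ℂ wK) := hint w hwR
    exact (isIntegral_algebraMap_iff (algebraMap K ℂ).injective).mp h1
  obtain ⟨n, hn0, hwn⟩ := NumberField.Embeddings.pow_eq_one_of_norm_eq_one K ℂ hwint hnorm
  have hwfin : IsOfFinOrder w := by
    refine isOfFinOrder_iff_pow_eq_one.mpr ⟨n, hn0, ?_⟩
    have h1 : ((wK ^ n : K) : ℂ) = ((1 : K) : ℂ) := by rw [hwn]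
    push_cast at h1
    exact h1
  -- bound on totients of orders of roots of unity in R
  have hfinrk : Module.finrank ℚ K = p - 1 := by
    rw [hK, IntermediateField.adjoin.finrank hζintQ, ← cyclotomic_eq_minpoly_rat hζ hp.pos,
      natDegree_cyclotomic, Nat.totient_prime hp]
  have tot_le : ∀ x : ℂ, x ∈ R → IsOfFinOrder x → (orderOf x).totient ≤ p - 1 := by
    intro x hxR hxfin
    set xK : K := ⟨x, hRK x hxR⟩ with hxKdef
    have hord : orderOf xK = orderOf x := by
      have := orderOf_injective (algebraMap K ℂ).toMonoidHom
        (fun a b hab => (algebraMap K ℂ).injective hab) xK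
      rw [← this]
      rfl
    have hm0 : 0 < orderOf x := hxfin.orderOf_pos
    have hprim : IsPrimitiveRoot xK (orderOf x) := by
      refine ⟨?_, fun l hl => ?_⟩
      · rw [← hord]; exact pow_orderOf_eq_one xK
      · rw [← hord]; exact orderOf_dvd_of_pow_eq_one hl
    have hminx : cyclotomic (orderOf x) ℚ = minpoly ℚ xK := cyclotomic_eq_minpoly_rat hprim hm0
    have hle := minpoly.natDegree_le (A := ℚ) xK
    rwa [← hminx, natDegree_cyclotomic, hfinrk] at hle
  -- the order of w divides 2p
  set d : ℕ := orderOf w with hddef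
  have hd0 : d ≠ 0 := hwfin.orderOf_pos.ne'
  have hordζ : orderOf ζ = p := hζ.eq_orderOf.symm
  have hfact : ∀ q : ℕ, (2 * p).factorization q =
      (if 2 = q then 1 else 0) + (if p = q then 1 else 0) := by
    intro q
    rw [Nat.factorization_mul two_ne_zero hp0, Finsupp.add_apply, Nat.prime_two.factorization,
      hp.factorization, Finsupp.single_apply, Finsupp.single_apply]
  have hmkord : ∀ m : ℕ, m ∣ d → ∃ x : ℂ, x ∈ R ∧ orderOf x = m :=
    fun m hmd => ⟨w ^ (d / m), Subalgebra.pow_mem R hwR _, orderOf_pow_orderOf_div hd0 hmd⟩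
  have key : ∀ m : ℕ, m ∣ d → Nat.Coprime m p → ∃ y : ℂ, y ∈ R ∧ orderOf y = m * p := by
    intro m hmd hcop
    obtain ⟨x, hxR, hxord⟩ := hmkord m hmd
    refine ⟨x * ζ, Subalgebra.mul_mem R hxR hζR, ?_⟩
    rw [(Commute.all x ζ).orderOf_mul_eq_mul_orderOf_of_coprime (by rw [hxord, hordζ]; exact hcop),
      hxord, hordζ]
  have hd2p : d ∣ 2 * p := by
    by_contra hnd
    rw [← Nat.factorization_le_iff_dvd hd0 (by positivity), Finsupp.le_def] at hnd
    push_neg at hnd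
    obtain ⟨q, hq⟩ := hnd
    have hq0 : d.factorization q ≠ 0 := by omega
    have hqprime : q.Prime := by
      have h1 : q ∈ d.factorization.support := Finsupp.mem_support_iff.mpr hq0
      rw [Nat.support_factorization] at h1
      exact Nat.prime_of_mem_primeFactors h1
    have hfq := hfact q
    have hordsmall : ∀ y : ℂ, y ∈ R → ∀ mo : ℕ, orderOf y = mo → 0 < mo → Nat.totient mo ≤ p - 1 := by
      intro y hyR mo hmo h0
      have hyfin : IsOfFinOrder y := by
        rw [← orderOf_pos_iff, hmo]; exact h0
      have := tot_le y hyR hyfin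
      rwa [hmo] at this
    by_cases hq2 : q = 2
    · have h2p1 : (2 * p).factorization q = 1 := by
        rw [hfq, if_pos hq2.symm, if_neg (by omega)]
      have h4d : 2 ^ 2 ∣ d := by
        refine dvd_trans (pow_dvd_pow 2 ?_) (Nat.ordProj_dvd d 2)
        rw [← hq2]; omega
      obtain ⟨y, hyR, hyord⟩ := key 4 (by norm_num at h4d ⊢; exact h4d)
        (Nat.Coprime.pow_left 2 ((Nat.coprime_primes Nat.prime_two hp).mpr (by omega)))
      have := hordsmall y hyR (4 * p) hyord (by positivity)
      rw [Nat.totient_mul (Nat.Coprime.pow_left 2 ((Nat.coprime_primes Nat.prime_two hp).mpr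
        (by omega))), Nat.totient_prime hp, (by decide : Nat.totient 4 = 2)] at this
      omega
    · by_cases hqp : q = p
      · have h2p1 : (2 * p).factorization q = 1 := by
          rw [hfq, if_neg (by omega), if_pos hqp.symm]
        have hp2d : p ^ 2 ∣ d := by
          refine dvd_trans (pow_dvd_pow p ?_) (Nat.ordProj_dvd d p)
          rw [← hqp]; omega
        obtain ⟨x, hxR, hxord⟩ := hmkord (p ^ 2) hp2d
        have := hordsmall x hxR (p ^ 2) hxord (by positivity)
        rw [Nat.totient_prime_pow hp (by norm_num : 0 < 2)] at this
        have h5 : 2 * (p - 1) ≤ p ^ (2 - 1) * (p - 1) :=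
          Nat.mul_le_mul_right _ (by rw [pow_one]; omega)
        omega
      · have h2p0 : (2 * p).factorization q = 0 := by
          rw [hfq, if_neg (by omega), if_neg (by omega)]
        have hqd : q ∣ d := by
          refine dvd_trans ?_ (Nat.ordProj_dvd d q)
          have h6 : 1 ≤ d.factorization q := by omega
          calc q = q ^ 1 := (pow_one q).symm
            _ ∣ q ^ d.factorization q := pow_dvd_pow q h6
        obtain ⟨y, hyR, hyord⟩ := key q hqd ((Nat.coprime_primes hqprime hp).mpr hqp)
        have := hordsmall y hyR (q * p) hyord (Nat.mul_pos hqprime.pos hp.pos)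
        rw [Nat.totient_mul ((Nat.coprime_primes hqprime hp).mpr hqp), Nat.totient_prime hp,
          Nat.totient_prime hqprime] at this
        have hq3 : 3 ≤ q := by
          have := hqprime.two_le; omega
        have h7 : 2 * (p - 1) ≤ (q - 1) * (p - 1) := Nat.mul_le_mul_right _ (by omega)
        omega
  -- w^2 is a p-th root of unity, equal to ζ^b with p ∤ b
  have hw2p : (w ^ 2) ^ p = 1 := by
    rw [← pow_mul]
    exact orderOf_dvd_iff_pow_eq_one.mp hd2p
  obtain ⟨b, hblt, hb⟩ := hζ.eq_pow_of_pow_eq_one hw2p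
  have hpb : ¬ p ∣ b := by
    intro hdvd
    have hζb : ζ ^ b = 1 := by
      obtain ⟨c, rfl⟩ := hdvd
      rw [pow_mul, hζp, one_pow]
    have hw2 : w * w = 1 := by
      have : w ^ 2 = 1 := by rw [← hb, hζb]
      rw [← this]; ring
    rcases mul_self_eq_one_iff.mp hw2 with h | h
    · exact hw1 h
    · exact hwm1 h
  -- conjugate of the divisibility relation
  have htc : cu ^ k - 1 = (g : ℂ) * ((starRingEnd ℂ) t) := by
    have h1 := congrArg (starRingEnd ℂ) ht
    rw [map_sub, map_pow, map_one, map_mul, map_natCast] at h1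
    rw [hcu]
    exact h1
  -- ζ^m - 1 = g * s with s ∈ R, where m = b * k is not divisible by p
  set m : ℕ := b * k with hmdef
  have hpm : ¬ p ∣ m := by
    intro h
    rcases (Nat.Prime.dvd_mul hp).mp h with h | h
    · exact hpb h
    · exact hpk h
  have hζm1 : ζ ^ m ≠ 1 := fun h => hpm (hζ.dvd_of_pow_eq_one m h)
  have hζm : ζ ^ m = (u ^ k) ^ 2 * (cv ^ k) ^ 2 := by
    have h1 : ζ ^ m = (ζ ^ b) ^ k := by rw [← pow_mul]
    rw [h1, hb, hw]
    ring
  obtain ⟨s, hsR, hgs⟩ : ∃ s, s ∈ R ∧ ζ ^ m - 1 = (g : ℂ) * s := by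
    refine ⟨(cv ^ k) ^ 2 * (t * (u ^ k + 1) - ((starRingEnd ℂ) t) * (cu ^ k + 1)), ?_, ?_⟩
    · exact Subalgebra.mul_mem R (Subalgebra.pow_mem R (Subalgebra.pow_mem R hcvR k) 2)
        (Subalgebra.sub_mem R
          (Subalgebra.mul_mem R htR (Subalgebra.add_mem R (Subalgebra.pow_mem R hu k)
            (Subalgebra.one_mem R)))
          (Subalgebra.mul_mem R (hconjR t htR)
            (Subalgebra.add_mem R (Subalgebra.pow_mem R hcuR k) (Subalgebra.one_mem R))))
    · have hcc : cu ^ k * cv ^ k = 1 := by rw [← mul_pow, hcucv, one_pow]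
      rw [hζm]
      linear_combination ((cv ^ k) ^ 2 * (u ^ k + 1)) * ht -
        ((cv ^ k) ^ 2 * (cu ^ k + 1)) * htc + (cu ^ k * cv ^ k + 1) * hcc
  -- g is nonzero
  have hg0 : g ≠ 0 := by
    intro h
    rw [h] at hgs
    push_cast at hgs
    rw [zero_mul, sub_eq_zero] at hgs
    exact hζm1 hgs
  -- g cannot be ≥ 2
  rcases Nat.lt_or_ge g 2 with hg | hg
  · omega
  · exfalso
    have hprimm : IsPrimitiveRoot (ζ ^ m) p :=
      hζ.pow_of_coprime m ((hp.coprime_iff_not_dvd.mpr hpm).symm)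
    have hcards : (primitiveRoots p ℂ).card = p - 1 := by
      rw [hζ.card_primitiveRoots, Nat.totient_prime hp]
    have hchoice : ∀ μ : ℂ, ∃ cc : ℂ, μ ∈ primitiveRoots p ℂ →
        (cc ∈ R ∧ 1 - μ = (ζ ^ m - 1) * cc) := by
      intro μ
      by_cases hμ : μ ∈ primitiveRoots p ℂ
      · have hμp : μ ^ p = 1 := ((mem_primitiveRoots hp.pos).mp hμ).pow_eq_one
        obtain ⟨i, hilt, hi⟩ := hprimm.eq_pow_of_pow_eq_one hμp
        refine ⟨-(∑ l ∈ Finset.range i, (ζ ^ m) ^ l), fun _ => ⟨?_, ?_⟩⟩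
        · exact Subalgebra.neg_mem R (Subalgebra.sum_mem R fun l _ =>
            Subalgebra.pow_mem R (Subalgebra.pow_mem R hζR m) l)
        · have hgeo := geom_sum_mul (ζ ^ m) i
          rw [← hi]
          linear_combination hgeo
      · exact ⟨0, fun h => absurd h hμ⟩
    choose c hc using hchoice
    have hprodp : ((p : ℕ) : ℂ) = ∏ μ ∈ primitiveRoots p ℂ, (1 - μ) := by
      have h1 : eval 1 (cyclotomic p ℂ) = ((p : ℕ) : ℂ) := by
        exact_mod_cast (eval_one_cyclotomic_prime (R := ℂ) (p := p))
      rw [← h1, cyclotomic_eq_prod_X_sub_primitiveRoots hζ, eval_prod]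
      exact Finset.prod_congr rfl fun μ _ => by simp
    set E : ℂ := s ^ (p - 1) * ∏ μ ∈ primitiveRoots p ℂ, c μ with hEdef
    have hPE : ((p : ℕ) : ℂ) = (g : ℂ) ^ (p - 1) * E := by
      calc ((p : ℕ) : ℂ) = ∏ μ ∈ primitiveRoots p ℂ, (1 - μ) := hprodp
        _ = ∏ μ ∈ primitiveRoots p ℂ, ((ζ ^ m - 1) * c μ) :=
            Finset.prod_congr rfl fun μ hμ => (hc μ hμ).2
        _ = (ζ ^ m - 1) ^ (p - 1) * ∏ μ ∈ primitiveRoots p ℂ, c μ := by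
            rw [Finset.prod_mul_distrib, Finset.prod_const, hcards]
        _ = (g : ℂ) ^ (p - 1) * E := by rw [hgs, mul_pow, hEdef]; ring
    have hER : E ∈ R := Subalgebra.mul_mem R (Subalgebra.pow_mem R hsR _)
      (Subalgebra.prod_mem R fun μ hμ => (hc μ hμ).1)
    set qq : ℚ := (p : ℚ) / (g : ℚ) ^ (p - 1) with hqqdef
    have hgC : ((g : ℂ)) ^ (p - 1) ≠ 0 := pow_ne_zero _ (Nat.cast_ne_zero.mpr hg0)
    have hEq : E = ((qq : ℚ) : ℂ) := by
      rw [hqqdef]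
      push_cast
      rw [eq_div_iff hgC]
      linear_combination -hPE
    have hqqint : IsIntegral ℤ qq := by
      have h1 : IsIntegral ℤ (((qq : ℚ) : ℂ)) := hEq ▸ hint E hER
      apply (isIntegral_algebraMap_iff (algebraMap ℚ ℂ).injective).mp
      rwa [eq_ratCast (algebraMap ℚ ℂ) qq]
    obtain ⟨zi, hzi⟩ := IsIntegrallyClosed.isIntegral_iff.mp hqqint
    have hzi' : (zi : ℚ) = qq := by rw [← hzi]; rfl
    have hcast : (p : ℚ) = (g : ℚ) ^ (p - 1) * (zi : ℚ) := by
      have hgQ : ((g : ℚ)) ^ (p - 1) ≠ 0 := pow_ne_zero _ (Nat.cast_ne_zero.mpr hg0)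
      rw [hzi', hqqdef, mul_div_cancel₀ _ hgQ]
    have hdvdZ : (g : ℤ) ^ (p - 1) ∣ (p : ℤ) := ⟨zi, by exact_mod_cast hcast⟩
    have hdvdN : g ^ (p - 1) ∣ p := by exact_mod_cast hdvdZ
    have hgp : g ∣ p := dvd_trans (dvd_pow_self g (by omega : p - 1 ≠ 0)) hdvdN
    rcases hp.eq_one_or_self_of_dvd g hgp with h | h
    · omega
    · have h2 : p ^ 2 ∣ p ^ (p - 1) := pow_dvd_pow p (by omega)
      have h3 : p ^ 2 ∣ p := h2.trans (h ▸ hdvdN)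
      have h4 := Nat.le_of_dvd hp.pos h3
      have h5 : p * p ≤ p * 1 := by rw [mul_one]; rw [pow_two] at h4; exact h4
      have h6 := Nat.le_of_mul_le_mul_left h5 hp.pos
      omega
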